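/- There exists a bijection from the positive integers onto the set of all binary partitions of all nonnegative integers (including the empty partition) such that each term of the sequence is obtained from the previous one either by an elementary move or by adding a single new part equal to 1. -/

import Mathlib

/-- A binary partition: a multiset of parts, each a power of two. -/
def IsBinaryPartition (P : Multiset ℕ) : Prop := ∀ p ∈ P, ∃ k : ℕ, p = 2 ^ k

/-- `P` and `Q` differ by an elementary move: for some `k`, `Q` is obtained from `P`
by removing two copies of `2^k` and adding one copy of `2^(k+1)`, or vice versa. -/
def ElementaryMove (P Q : Multiset ℕ) : Prop :=
  ∃ k : ℕ, Q + {2 ^ k, 2 ^ k} = P + {2 ^ (k + 1)} ∨ P + {2 ^ k, 2 ^ k} = Q + {2 ^ (k + 1)}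

def L : ℕ → List (Multiset ℕ)
  | 0 => [0]
  | n + 1 =>
    if n % 2 = 0 then ((L n).reverse.map (· + ({1} : Multiset ℕ)))
    else ((L n).reverse.map (· + ({1} : Multiset ℕ)))
      ++ (L ((n+1)/2)).map (Multiset.map (2 * ·))
decreasing_by
  · omega
  · omega
  · omega

lemma L_zero : L 0 = [0] := by simp [L]

lemma L_succ_even {n : ℕ} (h : n % 2 = 0) :
    L (n+1) = (L n).reverse.map (· + ({1} : Multiset ℕ)) := by
  rw [L, if_pos h]

lemma L_succ_odd {n : ℕ} (h : n % 2 = 1) :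
    L (n+1) = (L n).reverse.map (· + ({1} : Multiset ℕ))
      ++ (L ((n+1)/2)).map (Multiset.map (2 * ·)) := by
  rw [L, if_neg (by omega)]

lemma L_ne_nil : ∀ n, L n ≠ [] := by
  intro n
  match n with
  | 0 => simp [L_zero]
  | n + 1 =>
    rcases Nat.even_or_odd n with h | h
    · rw [L_succ_even (Nat.even_iff.mp h)]
      simp [L_ne_nil n]
    · rw [L_succ_odd (Nat.odd_iff.mp h)]
      simp [L_ne_nil n]

lemma isBP_add1 {P : Multiset ℕ} (h : IsBinaryPartition P) :
    IsBinaryPartition (P + {1}) := by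
  intro p hp
  rcases Multiset.mem_add.mp hp with hp | hp
  · exact h p hp
  · simp at hp; exact ⟨0, by simp [hp]⟩

lemma isBP_dbl {P : Multiset ℕ} (h : IsBinaryPartition P) :
    IsBinaryPartition (P.map (2 * ·)) := by
  intro p hp
  rcases Multiset.mem_map.mp hp with ⟨q, hq, rfl⟩
  obtain ⟨k, rfl⟩ := h q hq
  exact ⟨k + 1, by ring⟩

lemma mem_L {n : ℕ} {P : Multiset ℕ} (hP : P ∈ L n) :
    P.sum = n ∧ IsBinaryPartition P := by
  match n with
  | 0 =>
    rw [L_zero] at hP; simp at hP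
    simp [hP, IsBinaryPartition]
  | n + 1 =>
    rcases Nat.even_or_odd n with h | h
    · rw [L_succ_even (Nat.even_iff.mp h)] at hP
      rcases List.mem_map.mp hP with ⟨Q, hQ, rfl⟩
      obtain ⟨hs, hb⟩ := mem_L (List.mem_reverse.mp hQ)
      refine ⟨by simp [hs], isBP_add1 hb⟩
    · rw [L_succ_odd (Nat.odd_iff.mp h)] at hP
      rcases List.mem_append.mp hP with hP | hP
      · rcases List.mem_map.mp hP with ⟨Q, hQ, rfl⟩
        obtain ⟨hs, hb⟩ := mem_L (List.mem_reverse.mp hQ)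
        refine ⟨by simp [hs], isBP_add1 hb⟩
      · rcases List.mem_map.mp hP with ⟨Q, hQ, rfl⟩
        obtain ⟨hs, hb⟩ := mem_L hQ
        refine ⟨?_, isBP_dbl hb⟩
        have h2 := Nat.odd_iff.mp h
        rw [Multiset.sum_map_mul_left]
        simp only [Multiset.map_id']
        rw [hs]
        omega

/-! ### heads and lasts -/

lemma head?_eq_headI {α} [Inhabited α] {l : List α} (h : l ≠ []) :
    l.head? = some l.headI := by cases l <;> simp_all

lemma headI_append {α} [Inhabited α] {l₁ l₂ : List α} (h : l₁ ≠ []) :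
    (l₁ ++ l₂).headI = l₁.headI := by cases l₁ <;> simp_all

lemma headI_map {α} [Inhabited α] (f : α → α) {l : List α} (h : l ≠ []) :
    (l.map f).headI = f l.headI := by cases l <;> simp_all

def lst (l : List (Multiset ℕ)) : Multiset ℕ := l.reverse.headI

lemma lst_append {l₁ l₂ : List (Multiset ℕ)} (h : l₂ ≠ []) : lst (l₁ ++ l₂) = lst l₂ := by
  unfold lst; rw [List.reverse_append]; exact headI_append (by simp [h])

lemma lst_map (f : Multiset ℕ → Multiset ℕ) {l : List (Multiset ℕ)} (h : l ≠ []) :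
    lst (l.map f) = f (lst l) := by
  unfold lst; rw [← List.map_reverse]; exact headI_map f (by simp [h])

lemma lst_reverse (l : List (Multiset ℕ)) : lst l.reverse = l.headI := by
  unfold lst; rw [List.reverse_reverse]

lemma getLast?_eq_lst {l : List (Multiset ℕ)} (h : l ≠ []) : l.getLast? = some (lst l) := by
  rw [← List.head?_reverse]; exact head?_eq_headI (by simp [h])

lemma headI_L_succ (n : ℕ) : (L (n+1)).headI = lst (L n) + {1} := by
  rcases Nat.even_or_odd n with h | h
  · rw [L_succ_even (Nat.even_iff.mp h), headI_map _ (by simp [L_ne_nil n])]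
    rfl
  · rw [L_succ_odd (Nat.odd_iff.mp h), headI_append (by simp [L_ne_nil n]),
      headI_map _ (by simp [L_ne_nil n])]
    rfl

lemma lst_L_two_mul : ∀ m, lst (L (2 * m)) = (lst (L m)).map (2 * ·)
  | 0 => by simp [L_zero, lst]
  | m + 1 => by
    have h2 : 2 * (m + 1) = (2 * m + 1) + 1 := by ring
    have h3 : (2 * m + 1 + 1) / 2 = m + 1 := by omega
    rw [h2, L_succ_odd (by omega), lst_append (by simp [L_ne_nil]), h3,
      lst_map _ (L_ne_nil _)]

/-! ### elementary move lemmas -/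

lemma em_symm {P Q : Multiset ℕ} (h : ElementaryMove P Q) : ElementaryMove Q P := by
  obtain ⟨k, h | h⟩ := h
  · exact ⟨k, Or.inr h⟩
  · exact ⟨k, Or.inl h⟩

lemma em_add (R : Multiset ℕ) {P Q : Multiset ℕ} (h : ElementaryMove P Q) :
    ElementaryMove (P + R) (Q + R) := by
  obtain ⟨k, h | h⟩ := h
  · exact ⟨k, Or.inl (by rw [add_right_comm, h, add_right_comm])⟩
  · exact ⟨k, Or.inr (by rw [add_right_comm, h, add_right_comm])⟩

lemma dbl_pair (a : ℕ) : ({a, a} : Multiset ℕ).map (2 * ·) = {2 * a, 2 * a} := by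
  simp [Multiset.insert_eq_cons]

lemma em_dbl {P Q : Multiset ℕ} (h : ElementaryMove P Q) :
    ElementaryMove (P.map (2 * ·)) (Q.map (2 * ·)) := by
  have e : ∀ j : ℕ, 2 * 2 ^ j = 2 ^ (j + 1) := fun j => by ring
  obtain ⟨k, h | h⟩ := h
  · refine ⟨k + 1, Or.inl ?_⟩
    have := congrArg (Multiset.map (2 * ·)) h
    rw [Multiset.map_add, Multiset.map_add, dbl_pair, Multiset.map_singleton] at this
    rw [e, e] at this
    exact this
  · refine ⟨k + 1, Or.inr ?_⟩
    have := congrArg (Multiset.map (2 * ·)) h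
    rw [Multiset.map_add, Multiset.map_add, dbl_pair, Multiset.map_singleton] at this
    rw [e, e] at this
    exact this

lemma em_step (X : Multiset ℕ) : ElementaryMove (X + {1} + {1}) (X + {2}) := by
  refine ⟨0, Or.inl ?_⟩
  have h1 : (2 : ℕ) ^ 0 = 1 := rfl
  have h2 : (2 : ℕ) ^ (0 + 1) = 2 := rfl
  rw [h1, h2]
  have h3 : ({1, 1} : Multiset ℕ) = {1} + {1} := rfl
  rw [h3]
  abel

lemma chain_block1 {l : List (Multiset ℕ)} (h : List.IsChain ElementaryMove l) :
    List.IsChain ElementaryMove (l.reverse.map (· + ({1} : Multiset ℕ))) := by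
  rw [List.isChain_map, List.isChain_reverse]
  exact h.imp fun a b hab => em_add _ (em_symm hab)

lemma chain_block2 {l : List (Multiset ℕ)} (h : List.IsChain ElementaryMove l) :
    List.IsChain ElementaryMove (l.map (Multiset.map (2 * ·))) := by
  rw [List.isChain_map]
  exact h.imp fun a b hab => em_dbl hab

lemma chain_L : ∀ n, List.IsChain ElementaryMove (L n)
  | 0 => by simp [L_zero]
  | n + 1 => by
    rcases Nat.even_or_odd n with h | h
    · rw [L_succ_even (Nat.even_iff.mp h)]
      exact chain_block1 (chain_L n)
    · obtain ⟨m, rfl⟩ := h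
      have h3 : (2 * m + 1 + 1) / 2 = m + 1 := by omega
      rw [L_succ_odd (by omega), h3, List.isChain_append]
      refine ⟨chain_block1 (chain_L (2 * m + 1)), chain_block2 (chain_L (m + 1)), ?_⟩
      intro x hx y hy
      rw [getLast?_eq_lst (by simp [L_ne_nil])] at hx
      rw [head?_eq_headI (by simp [L_ne_nil])] at hy
      simp only [Option.mem_some_iff] at hx hy
      subst hx; subst hy
      rw [lst_map _ (by simp [L_ne_nil]), lst_reverse, headI_L_succ, lst_L_two_mul,
        headI_map _ (L_ne_nil _), headI_L_succ, Multiset.map_add, Multiset.map_singleton]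
      have : 2 * 1 = 2 := rfl
      rw [this]
      exact em_step _

/-! ### nodup and surjectivity -/

lemma one_mem_block1 {l : List (Multiset ℕ)} {x : Multiset ℕ}
    (hx : x ∈ l.reverse.map (· + ({1} : Multiset ℕ))) : 1 ∈ x := by
  obtain ⟨Q, _, rfl⟩ := List.mem_map.mp hx
  simp

lemma one_not_mem_block2 {l : List (Multiset ℕ)} {x : Multiset ℕ}
    (hx : x ∈ l.map (Multiset.map (2 * ·))) : 1 ∉ x := by
  obtain ⟨Q, _, rfl⟩ := List.mem_map.mp hx
  intro h
  obtain ⟨q, _, hq⟩ := Multiset.mem_map.mp h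
  omega

lemma nodup_L : ∀ n, (L n).Nodup
  | 0 => by simp [L_zero]
  | n + 1 => by
    have hinj1 : Function.Injective (· + ({1} : Multiset ℕ)) := fun a b h => by
      simpa using h
    have hinj2 : Function.Injective (Multiset.map (2 * · : ℕ → ℕ)) :=
      Multiset.map_injective (fun a b h => by omega)
    rcases Nat.even_or_odd n with h | h
    · rw [L_succ_even (Nat.even_iff.mp h)]
      exact (List.nodup_reverse.mpr (nodup_L n)).map hinj1
    · rw [L_succ_odd (Nat.odd_iff.mp h)]
      refine ((List.nodup_reverse.mpr (nodup_L n)).map hinj1).append (((nodup_L _)).map hinj2) ?_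
      rw [List.disjoint_left]
      exact fun a ha ha' => one_not_mem_block2 ha' (one_mem_block1 ha)

lemma surj_L : ∀ (n : ℕ) (P : Multiset ℕ), IsBinaryPartition P → P.sum = n → P ∈ L n
  | 0, P, hb, hs => by
    rw [L_zero]
    simp only [List.mem_singleton]
    by_contra hne
    obtain ⟨p, hp⟩ := Multiset.exists_mem_of_ne_zero hne
    obtain ⟨k, rfl⟩ := hb p hp
    have h1 : 2 ^ k ≤ P.sum := Multiset.single_le_sum (fun x _ => Nat.zero_le x) _ hp
    have h2 : 0 < 2 ^ k := Nat.pow_pos (by norm_num)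
    omega
  | n + 1, P, hb, hs => by
    by_cases h1 : 1 ∈ P
    · have hQ : P = P.erase 1 + {1} := by
        rw [add_comm, Multiset.singleton_add, Multiset.cons_erase h1]
      have hQs : (P.erase 1).sum = n := by
        have h2 := congrArg Multiset.sum hQ
        rw [Multiset.sum_add, Multiset.sum_singleton] at h2
        omega
      have hQb : IsBinaryPartition (P.erase 1) := fun p hp => hb p (Multiset.mem_of_mem_erase hp)
      have hmem : P ∈ (L n).reverse.map (· + ({1} : Multiset ℕ)) :=
        List.mem_map.mpr ⟨P.erase 1, List.mem_reverse.mpr (surj_L n _ hQb hQs), hQ.symm⟩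
      rcases Nat.even_or_odd n with h | h
      · rw [L_succ_even (Nat.even_iff.mp h)]; exact hmem
      · rw [L_succ_odd (Nat.odd_iff.mp h)]; exact List.mem_append_left _ hmem
    · have heven : ∀ p ∈ P, 2 ∣ p := by
        intro p hp
        obtain ⟨k, rfl⟩ := hb p hp
        match k with
        | 0 => exact absurd (by simpa using hp) h1
        | k + 1 => exact ⟨2 ^ k, by ring⟩
      have hdvd : 2 ∣ P.sum := Multiset.dvd_sum heven
      have hn : n % 2 = 1 := by omega
      rw [L_succ_odd hn]
      have hPQ : P = (P.map (· / 2)).map (2 * ·) := by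
        rw [Multiset.map_map]
        conv_lhs => rw [← Multiset.map_id P]
        apply Multiset.map_congr rfl
        intro p hp
        have := heven p hp
        simp only [id, Function.comp_apply]
        omega
      have hQb : IsBinaryPartition (P.map (· / 2)) := by
        intro q hq
        obtain ⟨p, hp, rfl⟩ := Multiset.mem_map.mp hq
        obtain ⟨k, rfl⟩ := hb p hp
        match k with
        | 0 => exact absurd (by simpa using hp) h1
        | k + 1 => exact ⟨k, by rw [pow_succ]; omega⟩
      have hQs : (P.map (· / 2)).sum = (n + 1) / 2 := by
        have h2 : P.sum = 2 * (P.map (· / 2)).sum := by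
          conv_lhs => rw [hPQ]
          rw [Multiset.sum_map_mul_left]
          simp [Multiset.map_id']
        omega
      exact List.mem_append_right _
        (List.mem_map.mpr ⟨P.map (· / 2), surj_L ((n + 1) / 2) _ hQb hQs, hPQ.symm⟩)

/-! ### the global sequence -/

def GRel (P Q : Multiset ℕ) : Prop := ElementaryMove P Q ∨ Q = P + {1}

def J (N : ℕ) : List (Multiset ℕ) := (List.range N).flatMap L

lemma J_zero : J 0 = [] := by simp [J]

lemma J_succ (N : ℕ) : J (N + 1) = J N ++ L N := by
  unfold J
  rw [List.range_succ, List.flatMap_append]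
  simp

lemma mem_J {P : Multiset ℕ} {N : ℕ} (h : P ∈ J N) : ∃ m < N, P ∈ L m := by
  unfold J at h
  obtain ⟨m, hm, hP⟩ := List.mem_flatMap.mp h
  exact ⟨m, List.mem_range.mp hm, hP⟩

lemma le_length_J : ∀ N, N ≤ (J N).length
  | 0 => by simp [J_zero]
  | N + 1 => by
    rw [J_succ, List.length_append]
    have h1 := le_length_J N
    have h2 : 0 < (L N).length := List.length_pos_iff.mpr (L_ne_nil N)
    omega

lemma J_prefix : ∀ {M N : ℕ}, M ≤ N → J M <+: J N := by
  intro M N h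
  induction N with
  | zero =>
    have : M = 0 := by omega
    subst this
    exact List.prefix_refl _
  | succ N ih =>
    by_cases hMN : M = N + 1
    · subst hMN; exact List.prefix_refl _
    · exact (ih (by omega)).trans (by rw [J_succ]; exact List.prefix_append _ _)

lemma nodup_J : ∀ N, (J N).Nodup
  | 0 => by simp [J_zero]
  | N + 1 => by
    rw [J_succ]
    refine (nodup_J N).append (nodup_L N) ?_
    rw [List.disjoint_left]
    intro a ha ha'
    obtain ⟨m, hm, hLm⟩ := mem_J ha
    have h1 := (mem_L hLm).1
    have h2 := (mem_L ha').1
    omega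

lemma chain_J : ∀ N, List.IsChain GRel (J N)
  | 0 => by simp [J_zero]
  | N + 1 => by
    rw [J_succ, List.isChain_append]
    refine ⟨chain_J N, (chain_L N).imp (fun a b h => Or.inl h), ?_⟩
    intro x hx y hy
    match N with
    | 0 => rw [J_zero] at hx; simp at hx
    | M + 1 =>
      rw [J_succ, List.getLast?_append, getLast?_eq_lst (L_ne_nil M)] at hx
      rw [head?_eq_headI (L_ne_nil (M + 1))] at hy
      simp only [Option.or_some, Option.some_or, Option.mem_some_iff] at hx hy
      subst hx; subst hy
      exact Or.inr (headI_L_succ M)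

def seq (i : ℕ) : Multiset ℕ := (J (i + 1)).getD i 0

lemma getD_of_prefix {l₁ l₂ : List (Multiset ℕ)} (h : l₁ <+: l₂) {i : ℕ}
    (hi : i < l₁.length) : l₂.getD i 0 = l₁.getD i 0 := by
  obtain ⟨t, rfl⟩ := h
  exact List.getD_append _ _ _ _ hi

lemma lt_length_J_succ (i : ℕ) : i < (J (i + 1)).length :=
  lt_of_lt_of_le (Nat.lt_succ_self i) (le_length_J (i + 1))

lemma seq_eq {N i : ℕ} (hi : i < (J N).length) : seq i = (J N).getD i 0 := by
  unfold seq
  rcases le_total (i + 1) N with h | h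
  · exact (getD_of_prefix (J_prefix h) (lt_length_J_succ i)).symm
  · exact getD_of_prefix (J_prefix h) hi

lemma seq_mem (i : ℕ) : seq i ∈ J (i + 1) := by
  unfold seq
  rw [List.getD_eq_getElem _ _ (lt_length_J_succ i)]
  exact List.getElem_mem _

lemma seq_inj : Function.Injective seq := by
  intro i j hij
  by_contra hne
  set N := max i j + 1 with hN
  have hi : i < (J N).length := lt_of_lt_of_le (by omega) (le_length_J N)
  have hj : j < (J N).length := lt_of_lt_of_le (by omega) (le_length_J N)
  rw [seq_eq hi, seq_eq hj, List.getD_eq_getElem _ _ hi, List.getD_eq_getElem _ _ hj] at hij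
  exact hne (((nodup_J N).getElem_inj_iff).mp hij)

lemma seq_surj {P : Multiset ℕ} (h : IsBinaryPartition P) : ∃ i, seq i = P := by
  have hmem : P ∈ J (P.sum + 1) := by
    rw [J_succ]
    exact List.mem_append_right _ (surj_L P.sum P h rfl)
  obtain ⟨i, hlt, hPi⟩ := List.mem_iff_getElem.mp hmem
  exact ⟨i, by rw [seq_eq hlt, List.getD_eq_getElem _ _ hlt, hPi]⟩

lemma seq_step (i : ℕ) : GRel (seq i) (seq (i + 1)) := by
  have h2 : i + 1 < (J (i + 2)).length := lt_of_lt_of_le (by omega) (le_length_J (i + 2))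
  have h1 : i < (J (i + 2)).length := by omega
  rw [seq_eq h1, seq_eq h2, List.getD_eq_getElem _ _ h1, List.getD_eq_getElem _ _ h2]
  have hc := List.isChain_iff_getElem.mp (chain_J (i + 2)) i (by omega)
  simpa using hc

lemma seq_binary (i : ℕ) : IsBinaryPartition (seq i) := by
  obtain ⟨m, _, hm⟩ := mem_J (seq_mem i)
  exact (mem_L hm).2

theorem gray_sequence_all_binary_partitions' :
    ∃ B : ℕ+ → Multiset ℕ,
      (∀ k, IsBinaryPartition (B k)) ∧
      Function.Injective B ∧
      (∀ P : Multiset ℕ, IsBinaryPartition P → ∃ k, B k = P) ∧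
      (∀ k, ElementaryMove (B k) (B (k + 1)) ∨ B (k + 1) = B k + {1}) := by
  refine ⟨fun k => seq ((k : ℕ) - 1), fun k => seq_binary _, ?_, ?_, ?_⟩
  · intro a b h
    have ha := a.pos
    have hb := b.pos
    have := seq_inj h
    exact PNat.coe_injective (by omega)
  · intro P hP
    obtain ⟨i, hi⟩ := seq_surj hP
    exact ⟨⟨i + 1, by omega⟩, by simpa using hi⟩
  · intro k
    have hk := k.pos
    have h2 : ((k : ℕ) - 1) + 1 = (k : ℕ) := by omega
    have h3 : ((k + 1 : ℕ+) : ℕ) - 1 = (k : ℕ) := by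
      have : ((k + 1 : ℕ+) : ℕ) = (k : ℕ) + 1 := rfl
      omega
    have hs := seq_step ((k : ℕ) - 1)
    rw [h2] at hs
    simp only []
    rw [h3]
    exact hs

theorem gray_sequence_all_binary_partitions :
    ∃ B : ℕ+ → Multiset ℕ,
      (∀ k, IsBinaryPartition (B k)) ∧
      Function.Injective B ∧
      (∀ P : Multiset ℕ, IsBinaryPartition P → ∃ k, B k = P) ∧
      (∀ k, ElementaryMove (B k) (B (k + 1)) ∨ B (k + 1) = B k + {1}) := by
  exact gray_sequence_all_binary_partitions'
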